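/- Under the noise model, the unique unpaired vertex of G is the global f-minimum v₀, and v₀ belongs to S. Consequently, for every δ ≥ ν, the spanning subgraph T_δ consisting of the negative edges with persistence at most δ contains all negative edges and is a spanning tree of G (so after δ-simplification there is exactly one critical vertex, which lies in the ω-neighborhood). -/

import Mathlib

open SimpleGraph

/-- The function value of an edge: the larger of the values of its two endpoints. -/
noncomputable def fbar {V : Type*} (f : V → ℝ) : Sym2 V → ℝ :=
  Sym2.lift ⟨fun u w => max (f u) (f w), fun u w => max_comm (f u) (f w)⟩

/-- The spanning subgraph `G_{≺e}` of `G` whose edges are exactly the edges `e'` of `G`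
with `e' ≺ e`. -/
def Gbelow {V : Type*} (G : SimpleGraph V) (lt : Sym2 V → Sym2 V → Prop) (e : Sym2 V) :
    SimpleGraph V :=
  SimpleGraph.fromEdgeSet {e' | e' ∈ G.edgeSet ∧ lt e' e}

/-- An edge `e` of `G` is negative if its two endpoints lie in different connected
components of `G_{≺e}`. -/
def IsNegEdge {V : Type*} (G : SimpleGraph V) (lt : Sym2 V → Sym2 V → Prop) (e : Sym2 V) :
    Prop :=
  e ∈ G.edgeSet ∧ ∃ u w : V, e = s(u, w) ∧ ¬ (Gbelow G lt e).Reachable u w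

/-- An edge `e` of `G` is positive if it is not negative. -/
def IsPosEdge {V : Type*} (G : SimpleGraph V) (lt : Sym2 V → Sym2 V → Prop) (e : Sym2 V) :
    Prop :=
  e ∈ G.edgeSet ∧ ¬ IsNegEdge G lt e

/-- The `f`-minimizing vertex of the connected component of `u` in the graph `H`. -/
noncomputable def compMin {V : Type*} [Fintype V] (f : V → ℝ) (H : SimpleGraph V) (u : V) :
    V := by
  classical
  exact Classical.choose (Finset.exists_min_image
    (Finset.univ.filter fun v => H.Reachable u v) f
    ⟨u, Finset.mem_filter.mpr ⟨Finset.mem_univ u, SimpleGraph.Reachable.refl u⟩⟩)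

/-- The vertex `m(e)` paired with a negative edge `e` by the elder rule: of the two
`f`-minimizing vertices of the components (in `G_{≺e}`) of the endpoints of `e`, the one
with the larger `f`-value. -/
noncomputable def pairVert {V : Type*} [Fintype V] (G : SimpleGraph V) (f : V → ℝ)
    (hf : Function.Injective f) (lt : Sym2 V → Sym2 V → Prop) (e : Sym2 V) : V :=
  Sym2.lift ⟨fun u w =>
      if f (compMin f (Gbelow G lt e) u) < f (compMin f (Gbelow G lt e) w)
      then compMin f (Gbelow G lt e) w
      else compMin f (Gbelow G lt e) u, by
    intro u w
    dsimp only
    rcases lt_trichotomy (f (compMin f (Gbelow G lt e) u)) (f (compMin f (Gbelow G lt e) w))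
      with h | h | h
    · rw [if_pos h, if_neg (lt_asymm h)]
    · rw [hf h]
    · rw [if_neg (lt_asymm h), if_pos h]⟩ e

/-- The persistence of a negative edge `e`: `f̄(e) - f(m(e))`. -/
noncomputable def persE {V : Type*} [Fintype V] (G : SimpleGraph V) (f : V → ℝ)
    (hf : Function.Injective f) (lt : Sym2 V → Sym2 V → Prop) (e : Sym2 V) : ℝ :=
  fbar f e - f (pairVert G f hf lt e)

section Helpers

variable {V : Type*}

lemma fbar_mk (f : V → ℝ) (u w : V) : fbar f s(u, w) = max (f u) (f w) := rfl

lemma sym2_rep {α : Type*} (e : Sym2 α) : ∃ a b, e = s(a, b) := by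
  induction e using Sym2.ind with
  | _ a b => exact ⟨a, b, rfl⟩

lemma gbelow_adj {G : SimpleGraph V} {lt : Sym2 V → Sym2 V → Prop} {e : Sym2 V} {a b : V} :
    (Gbelow G lt e).Adj a b ↔ G.Adj a b ∧ lt s(a, b) e := by
  simp only [Gbelow, SimpleGraph.fromEdgeSet_adj, Set.mem_setOf_eq, SimpleGraph.mem_edgeSet]
  exact ⟨fun h => h.1, fun h => ⟨h, h.1.ne⟩⟩

lemma gbelow_edgeSet {G : SimpleGraph V} {lt : Sym2 V → Sym2 V → Prop} {e e' : Sym2 V} :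
    e' ∈ (Gbelow G lt e).edgeSet ↔ e' ∈ G.edgeSet ∧ lt e' e := by
  rw [Gbelow, SimpleGraph.edgeSet_fromEdgeSet]
  constructor
  · rintro ⟨h, -⟩; exact h
  · intro h; exact ⟨h, G.not_isDiag_of_mem_edgeSet h.1⟩

/-- The spanning subgraph of edges `≼ e`. -/
def GleG (G : SimpleGraph V) (lt : Sym2 V → Sym2 V → Prop) (e : Sym2 V) : SimpleGraph V :=
  SimpleGraph.fromEdgeSet {e' | e' ∈ G.edgeSet ∧ (lt e' e ∨ e' = e)}

lemma gle_edgeSet {G : SimpleGraph V} {lt : Sym2 V → Sym2 V → Prop} {e e' : Sym2 V} :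
    e' ∈ (GleG G lt e).edgeSet ↔ e' ∈ G.edgeSet ∧ (lt e' e ∨ e' = e) := by
  rw [GleG, SimpleGraph.edgeSet_fromEdgeSet]
  constructor
  · rintro ⟨h, -⟩; exact h
  · intro h; exact ⟨h, G.not_isDiag_of_mem_edgeSet h.1⟩

lemma reachable_of_adj_reachable {H K : SimpleGraph V}
    (h : ∀ a b : V, H.Adj a b → K.Reachable a b) {u v : V} (hr : H.Reachable u v) :
    K.Reachable u v := by
  obtain ⟨p⟩ := hr
  induction p with
  | nil => exact SimpleGraph.Reachable.refl _
  | cons ha _ ih => exact (h _ _ ha).trans ih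

lemma walk_split {H K : SimpleGraph V} {x y : V} :
    ∀ {u w : V} (p : H.Walk u w), s(x, y) ∈ p.edges → p.edges.Nodup →
      (∀ e' ∈ p.edges, e' ≠ s(x, y) → e' ∈ K.edgeSet) →
      (K.Reachable u x ∧ K.Reachable y w) ∨ (K.Reachable u y ∧ K.Reachable x w) := by
  intro u w p
  induction p with
  | nil => simp
  | @cons u c w ha q ih =>
    intro hmem hnd hK
    rw [SimpleGraph.Walk.edges_cons] at hmem hnd hK
    rw [List.nodup_cons] at hnd
    by_cases hec : s(u, c) = s(x, y)
    · have hnotin : s(x, y) ∉ q.edges := hec ▸ hnd.1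
      have hq : ∀ e' ∈ q.edges, e' ∈ K.edgeSet := fun e' he' =>
        hK e' (List.mem_cons_of_mem _ he') (fun h => hnotin (h ▸ he'))
      have hcw : K.Reachable c w := ⟨q.transfer K hq⟩
      rcases Sym2.eq_iff.mp hec with ⟨rfl, rfl⟩ | ⟨rfl, rfl⟩
      · exact Or.inl ⟨SimpleGraph.Reachable.refl _, hcw⟩
      · exact Or.inr ⟨SimpleGraph.Reachable.refl _, hcw⟩
    · have hmem' : s(x, y) ∈ q.edges := by
        rcases List.mem_cons.mp hmem with h | h
        · exact absurd h.symm hec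
        · exact h
      have huc : K.Reachable u c :=
        (K.mem_edgeSet.mp (hK _ (List.mem_cons_self) hec)).reachable
      rcases ih hmem' hnd.2 (fun e' he' => hK e' (List.mem_cons_of_mem _ he')) with
        ⟨h1, h2⟩ | ⟨h1, h2⟩
      · exact Or.inl ⟨huc.trans h1, h2⟩
      · exact Or.inr ⟨huc.trans h1, h2⟩

lemma exists_list_max {α : Type*} (r : α → α → Prop) (P : α → Prop)
    (htrans : ∀ a, P a → ∀ b, P b → ∀ c, P c → r a b → r b c → r a c)
    (htot : ∀ a, P a → ∀ b, P b → a ≠ b → r a b ∨ r b a) :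
    ∀ l : List α, l ≠ [] → (∀ x ∈ l, P x) → ∃ m ∈ l, ∀ x ∈ l, x ≠ m → r x m := by
  intro l
  induction l with
  | nil => simp
  | cons a t ih =>
    intro _ hP
    rcases eq_or_ne t [] with rfl | ht
    · refine ⟨a, List.mem_cons_self, fun x hx hne => ?_⟩
      simp only [List.mem_cons, List.not_mem_nil, or_false] at hx
      exact absurd hx hne
    · obtain ⟨m, hm, hmax⟩ := ih ht (fun x hx => hP x (List.mem_cons_of_mem a hx))
      have hPm : P m := hP m (List.mem_cons_of_mem a hm)
      have hPa : P a := hP a (List.mem_cons_self)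
      by_cases ham : a = m
      · refine ⟨m, List.mem_cons_of_mem a hm, fun x hx hne => ?_⟩
        rcases List.mem_cons.mp hx with rfl | hx
        · exact absurd ham hne
        · exact hmax x hx hne
      · rcases htot a hPa m hPm ham with hr | hr
        · refine ⟨m, List.mem_cons_of_mem a hm, fun x hx hne => ?_⟩
          rcases List.mem_cons.mp hx with rfl | hx
          · exact hr
          · exact hmax x hx hne
        · refine ⟨a, List.mem_cons_self, fun x hx hne => ?_⟩
          rcases List.mem_cons.mp hx with rfl | hx
          · exact absurd rfl hne
          · by_cases hxm : x = m
            · exact hxm ▸ hr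
            · exact htrans x (hP x (List.mem_cons_of_mem a hx)) m hPm a hPa
                (hmax x hx hxm) hr

end Helpers

section CompMin

variable {V : Type*} [Fintype V]

lemma compMin_spec (f : V → ℝ) (H : SimpleGraph V) (u : V) :
    H.Reachable u (compMin f H u) ∧ ∀ v, H.Reachable u v → f (compMin f H u) ≤ f v := by
  classical
  unfold compMin
  generalize_proofs h
  obtain ⟨hmem, hmin⟩ := Classical.choose_spec h
  rw [Finset.mem_filter] at hmem
  exact ⟨hmem.2, fun v hv => hmin v (Finset.mem_filter.mpr ⟨Finset.mem_univ v, hv⟩)⟩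

lemma compMin_reachable (f : V → ℝ) (H : SimpleGraph V) (u : V) :
    H.Reachable u (compMin f H u) := (compMin_spec f H u).1

lemma compMin_le (f : V → ℝ) (H : SimpleGraph V) {u v : V} (hv : H.Reachable u v) :
    f (compMin f H u) ≤ f v := (compMin_spec f H u).2 v hv

lemma compMin_le_self (f : V → ℝ) (H : SimpleGraph V) (u : V) :
    f (compMin f H u) ≤ f u := compMin_le f H (SimpleGraph.Reachable.refl u)

lemma compMin_congr {f : V → ℝ} (hf : Function.Injective f) (H : SimpleGraph V)
    {u v : V} (h : H.Reachable u v) : compMin f H u = compMin f H v := by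
  apply hf
  apply le_antisymm
  · exact compMin_le f H (h.trans (compMin_reachable f H v))
  · exact compMin_le f H (h.symm.trans (compMin_reachable f H u))

lemma pairVert_mk (G : SimpleGraph V) (f : V → ℝ) (hf : Function.Injective f)
    (lt : Sym2 V → Sym2 V → Prop) (u w : V) :
    pairVert G f hf lt s(u, w) =
      if f (compMin f (Gbelow G lt s(u, w)) u) < f (compMin f (Gbelow G lt s(u, w)) w)
      then compMin f (Gbelow G lt s(u, w)) w
      else compMin f (Gbelow G lt s(u, w)) u := rfl

end CompMin
section MainLemmas

variable {V : Type*} [Fintype V] {G : SimpleGraph V} {f : V → ℝ}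
  {lt : Sym2 V → Sym2 V → Prop}

/-- Negative edges form a tree. -/
lemma negEdges_isTree
    (hlt_irrefl : ∀ e ∈ G.edgeSet, ¬ lt e e)
    (hlt_trans : ∀ e₁ ∈ G.edgeSet, ∀ e₂ ∈ G.edgeSet, ∀ e₃ ∈ G.edgeSet,
      lt e₁ e₂ → lt e₂ e₃ → lt e₁ e₃)
    (hlt_total : ∀ e₁ ∈ G.edgeSet, ∀ e₂ ∈ G.edgeSet, e₁ ≠ e₂ → lt e₁ e₂ ∨ lt e₂ e₁)
    (hG : G.Connected) :
    (SimpleGraph.fromEdgeSet {e | IsNegEdge G lt e}).IsTree := by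
  classical
  haveI : Finite (Sym2 V) := by infer_instance
  set T := SimpleGraph.fromEdgeSet {e | IsNegEdge G lt e} with hT
  have hTadj : ∀ e : Sym2 V, e ∈ G.edgeSet → IsNegEdge G lt e →
      ∀ u w : V, e = s(u, w) → T.Adj u w := by
    intro e he hneg u w heq
    subst heq
    exact (SimpleGraph.fromEdgeSet_adj _).mpr ⟨hneg, (G.mem_edgeSet.mp he).ne⟩
  -- every edge's endpoints are connected in T
  have key : ∀ (n : ℕ) (e : Sym2 V), e ∈ G.edgeSet →
      {e' | e' ∈ G.edgeSet ∧ lt e' e}.ncard ≤ n →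
      ∀ u w : V, e = s(u, w) → T.Reachable u w := by
    intro n
    induction n with
    | zero =>
      intro e he hcard u w heq
      by_cases hneg : IsNegEdge G lt e
      · exact (hTadj e he hneg u w heq).reachable
      · have hreach : (Gbelow G lt e).Reachable u w := by
          by_contra hc
          exact hneg ⟨he, u, w, heq, hc⟩
        refine reachable_of_adj_reachable (fun a b hab => ?_) hreach
        exfalso
        obtain ⟨hadj, hab2⟩ := gbelow_adj.mp hab
        have : s(a, b) ∈ {e' | e' ∈ G.edgeSet ∧ lt e' e} := ⟨G.mem_edgeSet.mpr hadj, hab2⟩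
        have hpos : 0 < {e' | e' ∈ G.edgeSet ∧ lt e' e}.ncard :=
          Set.ncard_pos (Set.toFinite _) |>.mpr ⟨_, this⟩
        omega
    | succ n ih =>
      intro e he hcard u w heq
      by_cases hneg : IsNegEdge G lt e
      · exact (hTadj e he hneg u w heq).reachable
      · have hreach : (Gbelow G lt e).Reachable u w := by
          by_contra hc
          exact hneg ⟨he, u, w, heq, hc⟩
        refine reachable_of_adj_reachable (fun a b hab => ?_) hreach
        obtain ⟨hadj, hab2⟩ := gbelow_adj.mp hab
        have hmemE : s(a, b) ∈ G.edgeSet := G.mem_edgeSet.mpr hadj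
        have hsub : {e' | e' ∈ G.edgeSet ∧ lt e' s(a, b)} ⊂ {e' | e' ∈ G.edgeSet ∧ lt e' e} := by
          refine (Set.ssubset_iff_of_subset ?_).mpr ⟨s(a, b), ⟨hmemE, hab2⟩, fun hc =>
            hlt_irrefl s(a, b) hmemE hc.2⟩
          rintro x ⟨hx1, hx2⟩
          exact ⟨hx1, hlt_trans x hx1 s(a, b) hmemE e he hx2 hab2⟩
        have hlt' : {e' | e' ∈ G.edgeSet ∧ lt e' s(a, b)}.ncard <
            {e' | e' ∈ G.edgeSet ∧ lt e' e}.ncard :=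
          Set.ncard_lt_ncard hsub (Set.toFinite _)
        exact ih s(a, b) hmemE (by omega) a b rfl
  haveI := hG.nonempty
  constructor
  · -- connected
    refine ⟨fun u w => ?_⟩
    refine reachable_of_adj_reachable (fun a b hab => ?_) (hG.preconnected u w)
    exact key _ s(a, b) (G.mem_edgeSet.mpr hab) le_rfl a b rfl
  · -- acyclic
    intro v c hc
    have hmemN : ∀ x ∈ c.edges, IsNegEdge G lt x := by
      intro x hx
      have hx' := c.edges_subset_edgeSet hx
      rw [hT, SimpleGraph.edgeSet_fromEdgeSet] at hx'
      exact hx'.1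
    have hne : c.edges ≠ [] := by
      intro h
      have h3 := hc.three_le_length
      have hl := c.length_edges
      rw [h] at hl
      simp at hl
      omega
    obtain ⟨m, hm, hmax⟩ := exists_list_max lt (· ∈ G.edgeSet) hlt_trans
      hlt_total c.edges hne (fun x hx => (hmemN x hx).1)
    obtain ⟨hmE, x, y, heq, hnr⟩ := hmemN m hm
    rw [heq] at hm
    have hcond : ∀ e' ∈ c.edges, e' ≠ s(x, y) → e' ∈ (Gbelow G lt m).edgeSet := by
      intro e' he' hne'
      exact gbelow_edgeSet.mpr ⟨(hmemN e' he').1, hmax e' he' (heq ▸ hne')⟩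
    rcases walk_split c hm hc.edges_nodup hcond with ⟨h1, h2⟩ | ⟨h1, h2⟩
    · exact hnr (h1.symm.trans h2.symm)
    · exact hnr (h2.trans h1)

end MainLemmas
section MainLemmas2

variable {V : Type*} [Fintype V] {G : SimpleGraph V} {f : V → ℝ}
  {lt : Sym2 V → Sym2 V → Prop}

/-- If the component of `v` contains nothing smaller, `v` reaches `a`, and `b` reaches
something smaller than `v`, then `e = s(a,b)` is negative and pairs `v`. -/
lemma paired_of (hf : Function.Injective f) {e : Sym2 V} {a b x v : V}
    (heq : e = s(a, b)) (heE : e ∈ G.edgeSet)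
    (hQ : ∀ z, (Gbelow G lt e).Reachable v z → ¬ f z < f v)
    (hva : (Gbelow G lt e).Reachable v a)
    (hbx : (Gbelow G lt e).Reachable b x) (hx : f x < f v) :
    IsNegEdge G lt e ∧ pairVert G f hf lt e = v := by
  subst heq
  set K := Gbelow G lt s(a, b) with hK
  have hcmv : compMin f K v = v := by
    apply hf
    apply le_antisymm (compMin_le_self f K v)
    exact not_lt.mp (hQ _ (compMin_reachable f K v))
  have hcma : compMin f K a = v := by
    rw [← compMin_congr hf K hva, hcmv]
  have hcmb_lt : f (compMin f K b) < f v := lt_of_le_of_lt (compMin_le f K hbx) hx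
  have hnr : ¬ K.Reachable a b := by
    intro h
    exact hQ (compMin f K b) ((hva.trans h).trans (compMin_reachable f K b)) hcmb_lt
  refine ⟨⟨heE, a, b, rfl, hnr⟩, ?_⟩
  rw [pairVert_mk, ← hK, hcma]
  rw [if_neg (not_lt.mpr hcmb_lt.le)]

/-- Every vertex other than the global minimum is paired. -/
lemma paired (hf : Function.Injective f)
    (hlt_irrefl : ∀ e ∈ G.edgeSet, ¬ lt e e)
    (hlt_trans : ∀ e₁ ∈ G.edgeSet, ∀ e₂ ∈ G.edgeSet, ∀ e₃ ∈ G.edgeSet,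
      lt e₁ e₂ → lt e₂ e₃ → lt e₁ e₃)
    (hlt_total : ∀ e₁ ∈ G.edgeSet, ∀ e₂ ∈ G.edgeSet, e₁ ≠ e₂ → lt e₁ e₂ ∨ lt e₂ e₁)
    (hG : G.Connected) (v₀ : V) (hv₀ : ∀ w : V, f v₀ ≤ f w) (v : V) (hv : v ≠ v₀) :
    ∃ e : Sym2 V, IsNegEdge G lt e ∧ pairVert G f hf lt e = v := by
  classical
  haveI : Finite (Sym2 V) := by infer_instance
  -- from a nonempty walk with all edges in `G`, produce a `≼`-bound on its edges
  have transfer_le : ∀ {p q : V} (w : G.Walk p q), p ≠ q →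
      ∃ m ∈ w.edges, m ∈ G.edgeSet ∧ (GleG G lt m).Reachable p q := by
    intro p q w hpq
    have hne : w.edges ≠ [] := by
      intro h
      have hl := w.length_edges
      rw [h] at hl
      simp at hl
      exact hpq (w.eq_of_length_eq_zero hl.symm ▸ rfl)
    obtain ⟨m, hm, hmax⟩ := exists_list_max lt (· ∈ G.edgeSet) hlt_trans hlt_total
      w.edges hne (fun x hx => w.edges_subset_edgeSet hx)
    have hmE : m ∈ G.edgeSet := w.edges_subset_edgeSet hm
    refine ⟨m, hm, hmE, ⟨w.transfer _ (fun e' he' => ?_)⟩⟩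
    refine gle_edgeSet.mpr ⟨w.edges_subset_edgeSet he', ?_⟩
    rcases eq_or_ne e' m with rfl | h
    · exact Or.inr rfl
    · exact Or.inl (hmax e' he' h)
  -- the set of candidate edges
  set A : Set (Sym2 V) :=
    {e | e ∈ G.edgeSet ∧ ∃ x, f x < f v ∧ (GleG G lt e).Reachable v x} with hA
  have hAne : A.Nonempty := by
    obtain ⟨w⟩ := hG.preconnected v v₀
    obtain ⟨m, -, hmE, hr⟩ := transfer_le w hv
    exact ⟨m, hmE, v₀, (hv₀ v).lt_of_ne (fun h => hv (hf h).symm), hr⟩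
  -- take the `≺`-least candidate edge
  have hAfin : A.Finite := Set.toFinite _
  obtain ⟨e, heA, hemin⟩ : ∃ e ∈ A, ∀ x ∈ A, x ≠ e → lt e x := by
    obtain ⟨e₀, he₀⟩ := hAne
    have hl : e₀ ∈ hAfin.toFinset.toList := by
      rw [Finset.mem_toList, Set.Finite.mem_toFinset]; exact he₀
    obtain ⟨m, hm, hmax⟩ := exists_list_max (fun a b => lt b a) (· ∈ G.edgeSet)
      (fun a ha b hb c hc h1 h2 => hlt_trans c hc b hb a ha h2 h1)
      (fun a ha b hb hne => (hlt_total a ha b hb hne).symm)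
      hAfin.toFinset.toList (List.ne_nil_of_mem hl)
      (fun x hx => by
        rw [Finset.mem_toList, Set.Finite.mem_toFinset] at hx; exact hx.1)
    rw [Finset.mem_toList, Set.Finite.mem_toFinset] at hm
    refine ⟨m, hm, fun x hx hne => hmax x ?_ hne⟩
    rw [Finset.mem_toList, Set.Finite.mem_toFinset]; exact hx
  obtain ⟨heE, x, hx, hrx⟩ := heA
  -- minimality: nothing smaller than `v` is reachable strictly below `e`
  have hQ : ∀ z, (Gbelow G lt e).Reachable v z → ¬ f z < f v := by
    intro z hr hz
    obtain ⟨q⟩ := hr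
    have hvz : v ≠ z := fun h => absurd hz (by rw [h]; exact lt_irrefl _)
    have hq : ∀ e' ∈ q.edges, e' ∈ G.edgeSet := fun e' he' =>
      (gbelow_edgeSet.mp (q.edges_subset_edgeSet he')).1
    -- transfer q to a walk in G
    obtain ⟨m, hmq, hmE, hr'⟩ := transfer_le (q.transfer G hq) hvz
    rw [q.edges_transfer hq] at hmq
    have hmlt : lt m e := (gbelow_edgeSet.mp (q.edges_subset_edgeSet hmq)).2
    have hmA : m ∈ A := ⟨hmE, z, hz, hr'⟩
    have hme : m ≠ e := fun h => hlt_irrefl e heE (h ▸ hmlt)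
    exact hlt_irrefl e heE (hlt_trans e heE m hmE e heE (hemin m hmA hme) hmlt)
  -- the walk witnessing `R e` must use `e`
  obtain ⟨q⟩ := hrx
  have hq' := q.bypass_isPath
  set p := q.bypass with hp
  have hpe : ∀ e' ∈ p.edges, e' ∈ G.edgeSet ∧ (lt e' e ∨ e' = e) := fun e' he' =>
    gle_edgeSet.mp (p.edges_subset_edgeSet he')
  by_cases hin : e ∈ p.edges
  · obtain ⟨a, b, rfl⟩ := sym2_rep e
    have hcond : ∀ e' ∈ p.edges, e' ≠ s(a, b) → e' ∈ (Gbelow G lt s(a, b)).edgeSet := by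
      intro e' he' hne'
      refine gbelow_edgeSet.mpr ⟨(hpe e' he').1, ?_⟩
      rcases (hpe e' he').2 with h | h
      · exact h
      · exact absurd h hne'
    rcases walk_split p hin hq'.edges_nodup hcond with ⟨h1, h2⟩ | ⟨h1, h2⟩
    · exact ⟨s(a, b), paired_of hf rfl heE hQ h1 h2 hx⟩
    · exact ⟨s(a, b), paired_of hf Sym2.eq_swap heE hQ h1 h2 hx⟩
  · exfalso
    have : (Gbelow G lt e).Reachable v x := by
      refine ⟨p.transfer _ (fun e' he' => ?_)⟩
      have h2 := (hpe e' he').2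
      refine gbelow_edgeSet.mpr ⟨(hpe e' he').1, ?_⟩
      rcases h2 with h | h
      · exact h
      · exact absurd (h ▸ he') hin
    exact hQ x this hx

end MainLemmas2
section MainLemmas3

variable {V : Type*} [Fintype V] {G : SimpleGraph V} {f : V → ℝ}
  {lt : Sym2 V → Sym2 V → Prop}

/-- For a negative edge, the paired vertex is never the global minimum. -/
lemma pairVert_ne_min (hf : Function.Injective f) {v₀ : V} (hv₀ : ∀ w : V, f v₀ ≤ f w)
    {e : Sym2 V} (he : IsNegEdge G lt e) : pairVert G f hf lt e ≠ v₀ := by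
  obtain ⟨heE, u, w, heq, hnr⟩ := he
  subst heq
  rw [pairVert_mk]
  set K := Gbelow G lt s(u, w) with hK
  set cu := compMin f K u with hcu
  set cw := compMin f K w with hcw
  split_ifs with h
  · intro hc
    rw [hc] at h
    exact absurd (hv₀ cu) (not_le.mpr h)
  · intro hc
    have h1 : f cw ≤ f cu := not_lt.mp h
    have h2 : f cu ≤ f cw := hc ▸ hv₀ cw
    have : cu = cw := hf (le_antisymm h2 h1)
    refine hnr ((compMin_reachable f K u).trans ?_)
    rw [← hcu, this, hcw]
    exact (compMin_reachable f K w).symm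

/-- Under the noise model, every negative edge has persistence at most `ν`. -/
lemma pers_le_nu (hf : Function.Injective f)
    (hlt_refine : ∀ e₁ ∈ G.edgeSet, ∀ e₂ ∈ G.edgeSet, fbar f e₁ < fbar f e₂ → lt e₁ e₂)
    {S : Set V} {β ν : ℝ} (hβν : 2 * ν < β) (hν : 0 ≤ ν)
    (hS : (G.induce S).Connected)
    (hfS : ∀ v ∈ S, f v ∈ Set.Icc (-β - ν) (-β))
    (hfSc : ∀ v : V, v ∉ S → f v ∈ Set.Icc (-ν) 0)
    {e : Sym2 V} (he : IsNegEdge G lt e) : persE G f hf lt e ≤ ν := by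
  classical
  obtain ⟨heE, u, w, heq, hnr⟩ := he
  subst heq
  have hlow : ∀ z : V, -β - ν ≤ f z := by
    intro z
    by_cases hz : z ∈ S
    · exact (hfS z hz).1
    · have := (hfSc z hz).1; linarith
  have hup : ∀ z : V, f z ≤ 0 := by
    intro z
    by_cases hz : z ∈ S
    · have := (hfS z hz).2; linarith
    · exact (hfSc z hz).2
  set K := Gbelow G lt s(u, w) with hK
  set cu := compMin f K u with hcu
  set cw := compMin f K w with hcw
  set pv := pairVert G f hf lt s(u, w) with hpv
  have hpv_eq : pv = if f cu < f cw then cw else cu := pairVert_mk G f hf lt u w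
  have hcu_le : f cu ≤ f (pv) ∧ f cw ≤ f pv := by
    rw [hpv_eq]
    split_ifs with h
    · exact ⟨h.le, le_rfl⟩
    · exact ⟨le_rfl, not_lt.mp h⟩
  have hpers : persE G f hf lt s(u, w) = max (f u) (f w) - f pv := by
    rw [persE, fbar_mk, hpv]
  by_cases hSuw : u ∈ S ∧ w ∈ S
  · have hb : max (f u) (f w) ≤ -β := max_le (hfS u hSuw.1).2 (hfS w hSuw.2).2
    rw [hpers]
    have := hlow pv
    linarith
  · -- some endpoint is outside S, hence fbar e > -β
    have hfbar : -β < max (f u) (f w) := by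
      rcases not_and_or.mp hSuw with h | h
      · have := (hfSc u h).1
        have := le_max_left (f u) (f w)
        linarith
      · have := (hfSc w h).1
        have := le_max_right (f u) (f w)
        linarith
    have hpvS : pv ∉ S := by
      intro hmem
      -- then both component minima lie in S
      have hpvb : f pv ≤ -β := (hfS pv hmem).2
      have hcuS : cu ∈ S := by
        by_contra h
        have := (hfSc cu h).1
        have := hcu_le.1
        linarith
      have hcwS : cw ∈ S := by
        by_contra h
        have := (hfSc cw h).1
        have := hcu_le.2
        linarith
      -- all of S lies in a single component of K
      have hmap : ∀ {p q : S}, (G.induce S).Adj p q → K.Adj (p : V) (q : V) := by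
        intro p q hpq
        have hadj : G.Adj (p : V) (q : V) := hpq
        refine gbelow_adj.mpr ⟨hadj, ?_⟩
        refine hlt_refine _ (G.mem_edgeSet.mpr hadj) _ heE ?_
        · rw [fbar_mk, fbar_mk]
          have h1 := (hfS _ p.2).2
          have h2 := (hfS _ q.2).2
          have := max_le h1 h2
          linarith
      have hreach : K.Reachable cu cw := by
        have h := (hS.preconnected ⟨cu, hcuS⟩ ⟨cw, hcwS⟩).map
          (⟨Subtype.val, hmap⟩ : (G.induce S) →g K)
        exact h
      exact hnr ((compMin_reachable f K u).trans (hreach.trans (compMin_reachable f K w).symm))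
    have h1 : -ν ≤ f pv := (hfSc pv hpvS).1
    have h2 : max (f u) (f w) ≤ 0 := max_le (hup u) (hup w)
    rw [hpers]
    linarith

end MainLemmas3
/-- Under the noise model, the unique unpaired vertex of `G` is the global
`f`-minimum `v₀`, which lies in `S`; consequently, for every `δ ≥ ν`, the spanning subgraph
`T_δ` of negative edges with persistence at most `δ` contains all negative edges and is a
spanning tree of `G`. -/
theorem unique_unpaired_vertex_and_spanning_tree {V : Type*} [Fintype V]
    (G : SimpleGraph V) (f : V → ℝ) (hf : Function.Injective f)
    (lt : Sym2 V → Sym2 V → Prop)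
    (hlt_irrefl : ∀ e ∈ G.edgeSet, ¬ lt e e)
    (hlt_trans : ∀ e₁ ∈ G.edgeSet, ∀ e₂ ∈ G.edgeSet, ∀ e₃ ∈ G.edgeSet,
      lt e₁ e₂ → lt e₂ e₃ → lt e₁ e₃)
    (hlt_total : ∀ e₁ ∈ G.edgeSet, ∀ e₂ ∈ G.edgeSet, e₁ ≠ e₂ → lt e₁ e₂ ∨ lt e₂ e₁)
    (hlt_refine : ∀ e₁ ∈ G.edgeSet, ∀ e₂ ∈ G.edgeSet, fbar f e₁ < fbar f e₂ → lt e₁ e₂)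
    (S : Set V) (β ν : ℝ) (hβν : 2 * ν < β) (hν : 0 ≤ ν)
    (hG : G.Connected) (hS : (G.induce S).Connected)
    (hfS : ∀ v ∈ S, f v ∈ Set.Icc (-β - ν) (-β))
    (hfSc : ∀ v : V, v ∉ S → f v ∈ Set.Icc (-ν) 0)
    (v₀ : V) (hv₀ : ∀ w : V, f v₀ ≤ f w) :
    v₀ ∈ S ∧
    (∀ v : V,
      (¬ ∃ e : Sym2 V, IsNegEdge G lt e ∧ pairVert G f hf lt e = v) ↔ v = v₀) ∧
    (∀ δ : ℝ, ν ≤ δ →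
      (∀ e : Sym2 V, IsNegEdge G lt e → persE G f hf lt e ≤ δ) ∧
      (SimpleGraph.fromEdgeSet
        {e | IsNegEdge G lt e ∧ persE G f hf lt e ≤ δ}).IsTree) := by

  classical
  have hv₀S : v₀ ∈ S := by
    obtain ⟨⟨s, hs⟩⟩ := hS.nonempty
    by_contra h
    have h1 := (hfSc v₀ h).1
    have h2 := (hfS s hs).2
    have h3 := hv₀ s
    linarith
  refine ⟨hv₀S, ?_, ?_⟩
  · intro v
    constructor
    · intro h
      by_contra hv
      exact h (paired hf hlt_irrefl hlt_trans hlt_total hG v₀ hv₀ v hv)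
    · rintro rfl ⟨e, he, hpe⟩
      exact pairVert_ne_min hf hv₀ he hpe
  · intro δ hδ
    have hb : ∀ e, IsNegEdge G lt e → persE G f hf lt e ≤ δ := fun e he =>
      le_trans (pers_le_nu hf hlt_refine hβν hν hS hfS hfSc he) hδ
    refine ⟨fun e he => hb e he, ?_⟩
    have hset : {e | IsNegEdge G lt e ∧ persE G f hf lt e ≤ δ} = {e | IsNegEdge G lt e} := by
      ext e
      exact ⟨fun h => h.1, fun h => ⟨h, hb e h⟩⟩
    rw [hset]
    exact negEdges_isTree hlt_irrefl hlt_trans hlt_total hG
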